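/- Let p be an odd prime, ω the Teichmüller character mod p, and for a coprime to p and N divisible by p define T_q(s, a, N : q^N) = ω^{−1}(a)⟨a⟩_q^s Σ_{j≥0} C(s,j) q^{aj} ((1−q^N)/(1−q^a))^j E_{j,q^N}, where ⟨a⟩_q = ω^{−1}(a)(1−q^a)/(1−q). Then for every nonnegative integer m with m+1 ≡ 0 (mod p−1), T_q(m, a, N : q^N) = ((1−q^N)/(1−q))^m · E_{m,q^N}(a/N), i.e., T_q interpolates the values [N]_q^m E_{m,q^N}(a/N) p-adically. -/

import Mathlib

open Filter Topology Finset

variable (p : ℕ) [Fact p.Prime]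

/-- Riemann sums for the modified `q`-Euler numbers
`E_{n,q} = ∫_{ℤ_p} ((1-q^x)/(1-q))^n q^{-x} dμ_q(x)`
(the factor `q^{-x}` cancels the `q^x` of the measure `(-q)^x`, leaving `(-1)^x`). -/
noncomputable def modEulerSum (q : ℚ_[p]) (n N : ℕ) : ℚ_[p] :=
  (1 + q) / (1 + q ^ p ^ N) *
    ∑ x ∈ range (p ^ N), ((1 - q ^ x) / (1 - q)) ^ n * (-1 : ℚ_[p]) ^ x

/-- The modified `q`-Euler numbers `E_{n,q}`, as the limit of the Riemann sums. -/
noncomputable def modEuler (q : ℚ_[p]) (n : ℕ) : ℚ_[p] :=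
  limUnder atTop (modEulerSum p q n)

/-- `q ^ x` for a `p`-adic integer exponent `x`, as the limit of `q ^ (x mod p^n)`. -/
noncomputable def qpowZ (q : ℚ_[p]) (x : ℤ_[p]) : ℚ_[p] :=
  limUnder atTop (fun n => q ^ x.appr n)

/-- `q ^ x` for a rational exponent `x` lying in `ℤ_p` (junk value `1` otherwise). -/
noncomputable def qpowQ (q : ℚ_[p]) (x : ℚ) : ℚ_[p] :=
  if h : ‖(x : ℚ_[p])‖ ≤ 1 then qpowZ p q ⟨(x : ℚ_[p]), h⟩ else 1

/-- The `q`-Euler polynomial `E_{m,q}(x) = ∫_{ℤ_p} q^{-t} ((1-q^{x+t})/(1-q))^m dμ_q(t)`,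
where `qx` stands for `q ^ x`. -/
noncomputable def qEulerPoly (q : ℚ_[p]) (m : ℕ) (qx : ℚ_[p]) : ℚ_[p] :=
  limUnder atTop (fun N => (1 + q) / (1 + q ^ p ^ N) *
    ∑ t ∈ range (p ^ N), (q ^ t)⁻¹ * ((1 - qx * q ^ t) / (1 - q)) ^ m * (-q) ^ t)

/-- The Teichmüller character: `ω(a) = lim_n a ^ (p ^ n)`. -/
noncomputable def teich (a : ℕ) : ℚ_[p] :=
  limUnder atTop (fun n => (a : ℚ_[p]) ^ p ^ n)

/-- `u ^ s` for a `p`-adic integer exponent `s`. -/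
noncomputable def padPow (u : ℚ_[p]) (s : ℤ_[p]) : ℚ_[p] :=
  limUnder atTop (fun n => u ^ s.appr n)

/-- The `p`-adic binomial coefficient `C(s, j) = s(s-1)⋯(s-j+1)/j!`. -/
noncomputable def cchoose (s : ℚ_[p]) (j : ℕ) : ℚ_[p] :=
  (∏ i ∈ range j, (s - (i : ℚ_[p]))) / (j.factorial : ℚ_[p])

/-- The `p`-adic interpolating function
`T_q(s, a, N : q^N) = ω(a)⁻¹ ⟨a⟩_q^s ∑_{j≥0} C(s,j) q^{aj} ((1-q^N)/(1-q^a))^j E_{j,q^N}`. -/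
noncomputable def Tq (q : ℚ_[p]) (s : ℤ_[p]) (a N : ℕ) : ℚ_[p] :=
  (teich p a)⁻¹ * padPow p ((teich p a)⁻¹ * ((1 - q ^ a) / (1 - q))) s *
    ∑' j : ℕ, cchoose p (s : ℚ_[p]) j * q ^ (a * j) *
      ((1 - q ^ N) / (1 - q ^ a)) ^ j * modEuler p (q ^ N) j

/-- The `q`-analogue of the higher order Dedekind type DC sums
`S_{m,q}(h, k : q^l) = ∑_{M=1}^{k-1} (-1)^{M-1} ((1-q^M)/(1-q^k)) E_{m,q^l}({hM/k})`. -/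
noncomputable def Smq (q : ℚ_[p]) (m h k l : ℕ) : ℚ_[p] :=
  ∑ M ∈ Ico 1 k, (-1 : ℚ_[p]) ^ (M - 1) * ((1 - q ^ M) / (1 - q ^ k)) *
    qEulerPoly p (q ^ l) m (qpowQ p q ((l : ℚ) * Int.fract ((h * M : ℚ) / k)))

/-- The `p`-adic Dedekind type DC sums
`S_{p,q}(s : h, k : q^k) = ∑_{M=1}^{k-1} ((1-q^M)/(1-q)) (-1)^{M-1} T_q(s, hM, k : q^k)`. -/
noncomputable def Spq (q : ℚ_[p]) (s : ℤ_[p]) (h k : ℕ) : ℚ_[p] :=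
  ∑ M ∈ Ico 1 k, ((1 - q ^ M) / (1 - q)) * (-1 : ℚ_[p]) ^ (M - 1) * Tq p q s (h * M) k

/-- The Euler polynomials, via the recurrence `∑_{k<n} C(n,k) E_k(x) + 2 E_n(x) = 2 x^n`. -/
noncomputable def eulerPoly (n : ℕ) (x : ℚ) : ℚ :=
  x ^ n - 1 / 2 * ∑ k ∈ (Finset.range n).attach, (n.choose k.1 : ℚ) * eulerPoly k.1 x
  termination_by n
  decreasing_by exact Finset.mem_range.mp k.2

/-- The periodic Euler function `Ē_m`, with `Ē_m(x) = E_m(x)` on `[0,1)` and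
`Ē_m(x+1) = -Ē_m(x)`. -/
noncomputable def periodicEuler (m : ℕ) (x : ℚ) : ℚ :=
  (-1 : ℚ) ^ ⌊x⌋ * eulerPoly m (Int.fract x)

section AuxBasic
variable {p : ℕ} [hp : Fact p.Prime]

lemma limUnder_eventually_eq {f : ℕ → ℚ_[p]} {c : ℚ_[p]} (h : ∀ᶠ n in atTop, f n = c) :
    limUnder atTop f = c :=
  (Filter.Tendsto.congr' (by filter_upwards [h] with n hn using hn.symm) tendsto_const_nhds).limUnder_eq

lemma appr_natCast_eventually (m : ℕ) : ∀ᶠ n in atTop, ((m : ℤ_[p]).appr n) = m := by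
  filter_upwards [eventually_ge_atTop m] with n hn
  have hpn : m < p ^ n := lt_of_lt_of_le (Nat.lt_two_pow_self (n := m))
    (le_trans (Nat.pow_le_pow_right (by norm_num) hn) (Nat.pow_le_pow_left hp.out.two_le n))
  have h1 := PadicInt.appr_spec n (m : ℤ_[p])
  rw [Ideal.mem_span_singleton] at h1
  have h2 : ((((m : ℤ) - ((m : ℤ_[p]).appr n) : ℤ)) : ℤ_[p]) = (m : ℤ_[p]) - ((m : ℤ_[p]).appr n) := by
    push_cast; ring
  have h3 : (p ^ n : ℤ) ∣ ((m : ℤ) - ((m : ℤ_[p]).appr n)) := by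
    rw [← PadicInt.norm_int_le_pow_iff_dvd, h2, PadicInt.norm_le_pow_iff_mem_span_pow]
    simpa [Ideal.mem_span_singleton] using h1
  have hm' : (m : ℤ) < (p : ℤ) ^ n := by exact_mod_cast hpn
  have ha' : (((m : ℤ_[p]).appr n : ℕ) : ℤ) < (p : ℤ) ^ n := by
    exact_mod_cast PadicInt.appr_lt (m : ℤ_[p]) n
  have h4 : ((m : ℤ) - ((m : ℤ_[p]).appr n)) = 0 := by
    refine Int.eq_zero_of_abs_lt_dvd h3 (abs_sub_lt_iff.2 ⟨?_, ?_⟩)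
    · linarith [Int.natCast_nonneg ((m : ℤ_[p]).appr n)]
    · linarith [Int.natCast_nonneg m]
  omega

lemma padPow_natCast (u : ℚ_[p]) (m : ℕ) : padPow p u (m : ℤ_[p]) = u ^ m := by
  unfold padPow
  refine limUnder_eventually_eq (p := p) ?_
  filter_upwards [appr_natCast_eventually (p := p) m] with n hn
  rw [hn]

lemma cchoose_natCast (m j : ℕ) :
    cchoose p (m : ℚ_[p]) j = if j ≤ m then (m.choose j : ℚ_[p]) else 0 := by
  unfold cchoose
  split_ifs with h
  · have hd : ((m.descFactorial j : ℕ) : ℚ_[p]) = ∏ i ∈ range j, ((m : ℚ_[p]) - (i : ℚ_[p])) := by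
      rw [Nat.descFactorial_eq_prod_range, Nat.cast_prod]
      refine Finset.prod_congr rfl fun i hi => ?_
      have hi' : i ≤ m := le_trans (Nat.le_of_lt_succ (Nat.lt_succ_of_lt (mem_range.mp hi))) h
      push_cast [Nat.cast_sub hi']
      ring
    rw [← hd, Nat.descFactorial_eq_factorial_mul_choose]
    push_cast
    rw [mul_comm, mul_div_assoc, div_self (by exact_mod_cast j.factorial_ne_zero), mul_one]
  · rw [Finset.prod_eq_zero (Finset.mem_range.mpr (lt_of_not_ge h)) (by simp), zero_div]

end AuxBasic

section AuxNorm
variable {p : ℕ} [hp : Fact p.Prime]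

lemma pq_norm_natCast_le_one (n : ℕ) : ‖(n : ℚ_[p])‖ ≤ 1 := by
  have := Padic.norm_int_le_one (p := p) (n : ℤ)
  simpa using this

lemma pq_one_sub_pow_eq (q : ℚ_[p]) (k : ℕ) :
    1 - q ^ k = (∑ i ∈ range k, q ^ i) * (1 - q) := by
  linear_combination geom_sum_mul q k

lemma pq_norm_geom_le {q : ℚ_[p]} (hq : ‖q‖ ≤ 1) (k : ℕ) :
    ‖∑ i ∈ range k, q ^ i‖ ≤ 1 := by
  refine IsUltrametricDist.norm_sum_le_of_forall_le_of_nonneg zero_le_one fun i _ => ?_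
  rw [norm_pow]
  exact pow_le_one₀ (norm_nonneg q) hq

lemma pq_norm_one_sub_pow_le {q : ℚ_[p]} (hq : ‖q‖ ≤ 1) (k : ℕ) :
    ‖1 - q ^ k‖ ≤ ‖1 - q‖ := by
  rw [pq_one_sub_pow_eq, norm_mul]
  exact mul_le_of_le_one_left (norm_nonneg _) (pq_norm_geom_le hq k)

lemma pq_norm_q_eq_one {q : ℚ_[p]} (hq : ‖1 - q‖ < 1) : ‖q‖ = 1 := by
  rcases eq_or_ne q 1 with rfl | hq1
  · simp
  · have h1 : ‖(1 : ℚ_[p])‖ ≠ ‖q - 1‖ := by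
      rw [norm_one]
      rw [← norm_neg, neg_sub] at hq
      exact (ne_of_gt hq)
    have : q = 1 + (q - 1) := by ring
    rw [this, Padic.add_eq_max_of_ne h1, norm_one]
    rw [← norm_neg, neg_sub] at hq
    exact max_eq_left hq.le

lemma pq_div_geom {q : ℚ_[p]} (hq1 : q ≠ 1) (k : ℕ) :
    (1 - q ^ k) / (1 - q) = ∑ i ∈ range k, q ^ i := by
  rw [pq_one_sub_pow_eq]
  exact mul_div_cancel_right₀ _ (sub_ne_zero.mpr (fun h => hq1 h.symm))

lemma pq_norm_div_geom_le {q : ℚ_[p]} (hq : ‖q‖ ≤ 1) (hq1 : q ≠ 1) (k : ℕ) :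
    ‖(1 - q ^ k) / (1 - q)‖ ≤ 1 := by
  rw [pq_div_geom hq1]
  exact pq_norm_geom_le hq k

lemma pq_norm_choose_mul {n k : ℕ} (hk : 1 ≤ k) (hkn : k ≤ n) :
    ‖(n.choose k : ℚ_[p])‖ * ‖(k : ℚ_[p])‖ ≤ ‖(n : ℚ_[p])‖ := by
  have hid : n * (n-1).choose (k-1) = n.choose k * k := by
    have h := Nat.add_one_mul_choose_eq (n - 1) (k - 1)
    have h1 : n - 1 + 1 = n := by omega
    have h2 : k - 1 + 1 = k := by omega
    simp only [Nat.succ_eq_add_one, h1, h2] at h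
    exact h
  have hcast : (n : ℚ_[p]) * ((n-1).choose (k-1) : ℚ_[p]) = (n.choose k : ℚ_[p]) * (k : ℚ_[p]) := by
    exact_mod_cast congrArg (Nat.cast : ℕ → ℚ_[p]) hid
  calc ‖(n.choose k : ℚ_[p])‖ * ‖(k : ℚ_[p])‖ = ‖(n.choose k : ℚ_[p]) * (k : ℚ_[p])‖ := (norm_mul _ _).symm
    _ = ‖(n : ℚ_[p])‖ * ‖((n-1).choose (k-1) : ℚ_[p])‖ := by rw [← hcast, norm_mul]
    _ ≤ ‖(n : ℚ_[p])‖ * 1 := by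
        exact mul_le_mul_of_nonneg_left (pq_norm_natCast_le_one _) (norm_nonneg _)
    _ = ‖(n : ℚ_[p])‖ := mul_one _

lemma pq_norm_le_inv_p {e : ℚ_[p]} (he : ‖e‖ < 1) : ‖e‖ ≤ (p : ℝ)⁻¹ := by
  rcases eq_or_ne e 0 with rfl | h0
  · simp only [norm_zero]
    positivity
  · rw [Padic.norm_eq_zpow_neg_valuation h0] at he ⊢
    have hp1 : (1 : ℝ) < (p : ℝ) := by exact_mod_cast hp.out.one_lt
    have hv : -e.valuation < 0 := by
      by_contra hc
      push_neg at hc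
      have h2 := zpow_le_zpow_right₀ hp1.le hc
      rw [zpow_zero] at h2
      linarith
    calc (p : ℝ) ^ (-e.valuation) ≤ (p : ℝ) ^ (-1 : ℤ) := zpow_le_zpow_right₀ hp1.le (by omega)
      _ = (p : ℝ)⁻¹ := by simp

lemma pq_klt (hp2 : p ≠ 2) {k : ℕ} (hk : 2 ≤ k) : k < p ^ (k - 1) := by
  have h3 : 3 ≤ p := by
    have := hp.out.two_le
    rcases Nat.lt_or_ge p 3 with h | h
    · interval_cases p
      · exact absurd rfl hp2
    · exact h
  calc k ≤ 2 ^ (k - 1) := by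
        have := Nat.lt_two_pow_self (n := k - 1)
        omega
    _ < 3 ^ (k - 1) := Nat.pow_lt_pow_left (by norm_num) (by omega)
    _ ≤ p ^ (k - 1) := Nat.pow_le_pow_left h3 _

lemma pq_norm_epow_lt {e : ℚ_[p]} (hp2 : p ≠ 2) (he : ‖e‖ < 1) (he0 : e ≠ 0)
    {k : ℕ} (hk : 2 ≤ k) : ‖e‖ ^ (k - 1) < ‖(k : ℚ_[p])‖ := by
  have hke : ¬ ((p : ℤ) ^ (k - 1) ∣ (k : ℤ)) := by
    intro hdvd
    have h1 : (p : ℤ) ^ (k - 1) ≤ (k : ℤ) := Int.le_of_dvd (by exact_mod_cast (by omega : 0 < k)) hdvd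
    have h2 : (k : ℤ) < (p : ℤ) ^ (k - 1) := by exact_mod_cast pq_klt hp2 hk
    omega
  have hlow : ¬ (‖((k : ℤ) : ℚ_[p])‖ ≤ (p : ℝ) ^ (-(k - 1 : ℕ) : ℤ)) := by
    rw [Padic.norm_int_le_pow_iff_dvd]
    exact hke
  push_neg at hlow
  calc ‖e‖ ^ (k - 1) ≤ ((p : ℝ)⁻¹) ^ (k - 1) :=
        pow_le_pow_left₀ (norm_nonneg e) (pq_norm_le_inv_p he) _
    _ = (p : ℝ) ^ (-(k - 1 : ℕ) : ℤ) := by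
        rw [zpow_neg, zpow_natCast, inv_pow]
    _ < ‖((k : ℤ) : ℚ_[p])‖ := hlow
    _ = ‖(k : ℚ_[p])‖ := by norm_cast

lemma pq_norm_pow_sub_one (hp2 : p ≠ 2) {q : ℚ_[p]} (hq : ‖1 - q‖ < 1) (n : ℕ) :
    ‖q ^ n - 1‖ = ‖(n : ℚ_[p])‖ * ‖q - 1‖ := by
  set e := q - 1 with hedef
  have he : ‖e‖ < 1 := by rwa [← norm_neg, neg_sub] at hq
  rcases eq_or_ne e 0 with h0 | he0
  · have hq1 : q = 1 := sub_eq_zero.mp h0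
    simp [hq1, h0]
  rcases Nat.eq_zero_or_pos n with rfl | hn
  · simp
  -- expansion
  have hexp : q ^ n - 1 = (n : ℚ_[p]) * e + ∑ k ∈ Ico 2 (n + 1), e ^ k * (n.choose k : ℚ_[p]) := by
    have hq' : q = e + 1 := by rw [hedef]; ring
    rw [hq', add_pow]
    simp only [one_pow, mul_one]
    rw [Finset.range_eq_Ico, Finset.sum_eq_sum_Ico_succ_bot (by omega : 0 < n + 1),
      Finset.sum_eq_sum_Ico_succ_bot (by omega : 1 < n + 1)]
    simp [pow_one]
    ring
  have hne0 : ‖(n : ℚ_[p]) * e‖ ≠ 0 := by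
    rw [norm_mul]
    have h1 : (n : ℚ_[p]) ≠ 0 := by exact_mod_cast Nat.cast_ne_zero.mpr (by omega)
    exact mul_ne_zero (norm_ne_zero_iff.mpr h1) (norm_ne_zero_iff.mpr he0)
  have hRlt : ‖∑ k ∈ Ico 2 (n + 1), e ^ k * (n.choose k : ℚ_[p])‖ < ‖(n : ℚ_[p]) * e‖ := by
    have hpos : 0 < ‖(n : ℚ_[p]) * e‖ := lt_of_le_of_ne (norm_nonneg _) (Ne.symm hne0)
    rcases Finset.eq_empty_or_nonempty (Ico 2 (n + 1)) with hemp | hne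
    · rw [hemp, Finset.sum_empty, norm_zero]; exact hpos
    · refine lt_of_le_of_lt (hne.norm_sum_le_sup'_norm _) ?_
      rw [Finset.sup'_lt_iff]
      intro k hk
      obtain ⟨hk2, hkn⟩ := Finset.mem_Ico.mp hk
      have hkn' : k ≤ n := by omega
      -- ‖e^k * C‖ < ‖n‖ * ‖e‖
      rw [norm_mul, norm_pow, norm_mul]
      have hsplit : ‖e‖ ^ k = ‖e‖ * ‖e‖ ^ (k - 1) := by
        rw [← pow_succ']
        congr 1
        omega
      rw [hsplit]
      have hC := pq_norm_choose_mul (p := p) (n := n) (k := k) (by omega) hkn'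
      have hek := pq_norm_epow_lt hp2 he he0 hk2
      have hepos : 0 < ‖e‖ := norm_pos_iff.mpr he0
      calc ‖e‖ * ‖e‖ ^ (k - 1) * ‖(n.choose k : ℚ_[p])‖
          < ‖e‖ * ‖(k : ℚ_[p])‖ * ‖(n.choose k : ℚ_[p])‖ := by
            have hC0 : 0 < ‖(n.choose k : ℚ_[p])‖ := by
              have : (n.choose k : ℚ_[p]) ≠ 0 := by
                exact_mod_cast Nat.cast_ne_zero.mpr (Nat.choose_pos hkn').ne'
              exact norm_pos_iff.mpr this
            exact mul_lt_mul_of_pos_right (mul_lt_mul_of_pos_left hek hepos) hC0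
        _ ≤ ‖(n : ℚ_[p])‖ * ‖e‖ := by
            nlinarith [norm_nonneg (e), hC]
  rw [hexp, Padic.add_eq_max_of_ne (ne_of_lt hRlt).symm, max_eq_left hRlt.le, norm_mul]

lemma pq_pow_ne_one (hp2 : p ≠ 2) {q : ℚ_[p]} (hq : ‖1 - q‖ < 1) (hq1 : q ≠ 1)
    {n : ℕ} (hn : 0 < n) : q ^ n ≠ 1 := by
  intro hcon
  have h := pq_norm_pow_sub_one hp2 hq n
  rw [hcon, sub_self, norm_zero] at h
  have h1 : (n : ℚ_[p]) ≠ 0 := by exact_mod_cast Nat.cast_ne_zero.mpr hn.ne'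
  have h2 : q - 1 ≠ 0 := sub_ne_zero.mpr hq1
  exact (mul_ne_zero (norm_ne_zero_iff.mpr h1) (norm_ne_zero_iff.mpr h2)) h.symm

lemma pq_norm_int_le {N : ℕ} {z : ℤ} (h : ((p : ℤ) ^ N) ∣ z) :
    ‖(z : ℚ_[p])‖ ≤ (p : ℝ)⁻¹ ^ N := by
  have h' : ((p ^ N : ℤ)) ∣ z := by push_cast; exact h
  have := (Padic.norm_int_le_pow_iff_dvd (p := p) z N).mpr h'
  calc ‖(z : ℚ_[p])‖ ≤ (p : ℝ) ^ (-(N : ℤ)) := this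
    _ = (p : ℝ)⁻¹ ^ N := by rw [zpow_neg, zpow_natCast, inv_pow]

section Teich
variable {a : ℕ}

lemma teich_fermat (a : ℕ) (n : ℕ) :
    ‖((a : ℚ_[p]) ^ p ^ (n + 1) - (a : ℚ_[p]) ^ p ^ n)‖ ≤ (p : ℝ)⁻¹ ^ (n + 1) := by
  have hz : (((a : ℤ) ^ p - (a : ℤ) : ℤ) : ZMod p) = 0 := by
    push_cast
    rw [ZMod.pow_card]
    ring
  have hf : (p : ℤ) ∣ ((a : ℤ) ^ p - (a : ℤ)) := by
    exact_mod_cast (ZMod.intCast_zmod_eq_zero_iff_dvd _ p).mp hz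
  have hd := dvd_sub_pow_of_dvd_sub hf n
  have hd2 : ((p : ℤ) ^ (n + 1)) ∣ ((a : ℤ) ^ p ^ (n + 1) - (a : ℤ) ^ p ^ n) := by
    have he : ((a : ℤ) ^ p) ^ p ^ n = (a : ℤ) ^ p ^ (n + 1) := by
      rw [← pow_mul, ← pow_succ']
    rw [← he]
    exact_mod_cast hd
  have key := pq_norm_int_le (p := p) hd2
  have hc : (((a : ℤ) ^ p ^ (n + 1) - (a : ℤ) ^ p ^ n : ℤ) : ℚ_[p])
      = (a : ℚ_[p]) ^ p ^ (n + 1) - (a : ℚ_[p]) ^ p ^ n := by push_cast; ring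
  rwa [hc] at key

lemma teich_cauchy (a : ℕ) : CauchySeq (fun n => (a : ℚ_[p]) ^ p ^ n) := by
  have hp1 : (1 : ℝ) < (p : ℝ) := by exact_mod_cast hp.out.one_lt
  refine cauchySeq_of_le_geometric (p : ℝ)⁻¹ 1 (by rw [inv_lt_one_iff₀]; right; exact hp1) ?_
  intro n
  rw [dist_eq_norm, ← norm_neg, neg_sub]
  calc ‖(a : ℚ_[p]) ^ p ^ (n + 1) - (a : ℚ_[p]) ^ p ^ n‖ ≤ (p : ℝ)⁻¹ ^ (n + 1) :=
        teich_fermat a n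
    _ ≤ (p : ℝ)⁻¹ ^ n := pow_le_pow_of_le_one (by positivity)
        (by rw [inv_le_one_iff₀]; right; exact hp1.le) (by omega)
    _ = 1 * (p : ℝ)⁻¹ ^ n := (one_mul _).symm

lemma teich_tendsto (a : ℕ) :
    Filter.Tendsto (fun n => (a : ℚ_[p]) ^ p ^ n) atTop (𝓝 (teich p a)) := by
  obtain ⟨t, ht⟩ := cauchySeq_tendsto_of_complete (teich_cauchy (p := p) a)
  have : teich p a = t := ht.limUnder_eq
  rwa [this]

lemma teich_pow_eq_one (hap : a.Coprime p) : (teich p a) ^ (p - 1) = 1 := by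
  have h1 : Filter.Tendsto (fun n => ((a : ℚ_[p]) ^ p ^ n) ^ (p - 1)) atTop
      (𝓝 ((teich p a) ^ (p - 1))) := (teich_tendsto (p := p) a).pow _
  have hp1 : (1 : ℝ) < (p : ℝ) := by exact_mod_cast hp.out.one_lt
  have hb : ∀ n : ℕ, ‖((a : ℚ_[p]) ^ p ^ n) ^ (p - 1) - 1‖ ≤ (p : ℝ)⁻¹ ^ (n + 1) := by
    intro n
    have hcop : a.Coprime (p ^ (n + 1)) := Nat.Coprime.pow_right (n + 1) hap
    have heuler := Nat.ModEq.pow_totient hcop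
    rw [Nat.totient_prime_pow_succ hp.out n] at heuler
    have hdvd : ((p : ℤ) ^ (n + 1)) ∣ ((a : ℤ) ^ (p ^ n * (p - 1)) - 1) := by
      have h' := (Nat.modEq_iff_dvd (n := p ^ (n + 1))).mp heuler
      push_cast at h'
      exact dvd_sub_comm.mp h'
    have key := pq_norm_int_le (p := p) hdvd
    have hc : (((a : ℤ) ^ (p ^ n * (p - 1)) - 1 : ℤ) : ℚ_[p])
        = ((a : ℚ_[p]) ^ p ^ n) ^ (p - 1) - 1 := by push_cast [pow_mul]; ring
    rwa [hc] at key
  have h2 : Filter.Tendsto (fun n => ((a : ℚ_[p]) ^ p ^ n) ^ (p - 1)) atTop (𝓝 1) := by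
    rw [tendsto_iff_norm_sub_tendsto_zero]
    refine squeeze_zero (fun n => norm_nonneg _) hb ?_
    have h0 : (0 : ℝ) ≤ (p : ℝ)⁻¹ := by positivity
    have hlt : (p : ℝ)⁻¹ < 1 := by rw [inv_lt_one_iff₀]; right; exact hp1
    have := (tendsto_pow_atTop_nhds_zero_of_lt_one h0 hlt).const_mul ((p : ℝ)⁻¹)
    simp only [mul_zero] at this
    refine this.congr fun n => ?_
    rw [← pow_succ']
  exact tendsto_nhds_unique h1 h2

end Teich

lemma pq_sum_range_mul {M : Type*} [AddCommMonoid M] (f : ℕ → M) (b : ℕ) :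
    ∀ a : ℕ, ∑ x ∈ range (b * a), f x = ∑ v ∈ range a, ∑ u ∈ range b, f (u + b * v)
  | 0 => by simp
  | a + 1 => by
    rw [Nat.mul_succ, Finset.sum_range_add, pq_sum_range_mul f b a, Finset.sum_range_succ]
    congr 1
    refine Finset.sum_congr rfl fun u _ => ?_
    congr 1
    ring

lemma pq_norm_pow_sub_pow_le {A B : ℚ_[p]} (hA : ‖A‖ ≤ 1) (hB : ‖B‖ ≤ 1) :
    ∀ n : ℕ, ‖A ^ n - B ^ n‖ ≤ ‖A - B‖
  | 0 => by simp
  | n + 1 => by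
    have h : A ^ (n + 1) - B ^ (n + 1) = A * (A ^ n - B ^ n) + (A - B) * B ^ n := by ring
    rw [h]
    refine le_trans (Padic.nonarchimedean _ _) (max_le ?_ ?_)
    · rw [norm_mul]
      calc ‖A‖ * ‖A ^ n - B ^ n‖ ≤ 1 * ‖A - B‖ :=
            mul_le_mul hA (pq_norm_pow_sub_pow_le hA hB n) (norm_nonneg _) zero_le_one
        _ = ‖A - B‖ := one_mul _
    · rw [norm_mul, norm_pow]
      calc ‖A - B‖ * ‖B‖ ^ n ≤ ‖A - B‖ * 1 :=
            mul_le_mul_of_nonneg_left (pow_le_one₀ (norm_nonneg _) hB) (norm_nonneg _)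
        _ = ‖A - B‖ := mul_one _

lemma pq_norm_two (hp2 : p ≠ 2) : ‖(2 : ℚ_[p])‖ = 1 := by
  have h2 : ((2 : ℤ) : ℚ_[p]) = (2 : ℚ_[p]) := by norm_cast
  refine le_antisymm (by rw [← h2]; exact Padic.norm_int_le_one 2) ?_
  by_contra hlt
  push_neg at hlt
  rw [← h2] at hlt
  have := (Padic.norm_intCast_lt_one_iff (k := 2)).mp hlt
  have hp' : p ∣ 2 := by exact_mod_cast this
  have h1 := Nat.le_of_dvd (by norm_num) hp'
  have h2' := hp.out.two_le
  omega

lemma pq_norm_one_add (hp2 : p ≠ 2) {x : ℚ_[p]} (hx : ‖x - 1‖ < 1) : ‖1 + x‖ = 1 := by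
  have h : (1 : ℚ_[p]) + x = 2 + (x - 1) := by ring
  rw [h, Padic.add_eq_max_of_ne (by rw [pq_norm_two hp2]; exact (ne_of_gt hx)),
    pq_norm_two hp2, max_eq_left hx.le]

section MES
variable (hp2 : p ≠ 2) {Q : ℚ_[p]} (hq : ‖1 - Q‖ < 1) (hq1 : Q ≠ 1)

include hq in
lemma pq_normQ : ‖Q‖ = 1 := pq_norm_q_eq_one hq

include hq hq1 in
lemma pq_g_le (n x : ℕ) : ‖((1 - Q ^ x) / (1 - Q)) ^ n‖ ≤ 1 := by
  rw [norm_pow]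
  exact pow_le_one₀ (norm_nonneg _) (pq_norm_div_geom_le (pq_normQ hq).le hq1 x)

include hp2 hq hq1 in
lemma pq_gdiff (n u v N : ℕ) :
    ‖((1 - Q ^ (u + p ^ N * v)) / (1 - Q)) ^ n - ((1 - Q ^ u) / (1 - Q)) ^ n‖
      ≤ (p : ℝ)⁻¹ ^ N := by
  have hQn : ‖Q‖ = 1 := pq_normQ hq
  have hd : (1 : ℚ_[p]) - Q ≠ 0 := sub_ne_zero.mpr (fun h => hq1 h.symm)
  have hbase : ‖(1 - Q ^ (u + p ^ N * v)) / (1 - Q) - (1 - Q ^ u) / (1 - Q)‖ ≤ (p : ℝ)⁻¹ ^ N := by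
    have heq : (1 - Q ^ (u + p ^ N * v)) / (1 - Q) - (1 - Q ^ u) / (1 - Q)
        = Q ^ u * (1 - (Q ^ p ^ N) ^ v) / (1 - Q) := by
      rw [div_sub_div_same]
      congr 1
      rw [← pow_mul, pow_add]
      ring
    rw [heq, norm_div, norm_mul, norm_pow, hQn, one_pow, one_mul]
    have h1 : ‖1 - (Q ^ p ^ N) ^ v‖ ≤ ‖1 - Q ^ p ^ N‖ := by
      refine pq_norm_one_sub_pow_le ?_ v
      rw [norm_pow, hQn, one_pow]
    have h2 : ‖1 - Q ^ p ^ N‖ = (p : ℝ)⁻¹ ^ N * ‖1 - Q‖ := by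
      rw [← norm_neg, neg_sub, pq_norm_pow_sub_one hp2 hq, ← norm_neg (Q - 1), neg_sub]
      congr 1
      push_cast
      rw [norm_pow, Padic.norm_p, inv_pow]
    rw [div_le_iff₀ (norm_pos_iff.mpr hd)]
    calc ‖1 - (Q ^ p ^ N) ^ v‖ ≤ ‖1 - Q ^ p ^ N‖ := h1
      _ = (p : ℝ)⁻¹ ^ N * ‖1 - Q‖ := h2
  calc ‖((1 - Q ^ (u + p ^ N * v)) / (1 - Q)) ^ n - ((1 - Q ^ u) / (1 - Q)) ^ n‖
      ≤ ‖(1 - Q ^ (u + p ^ N * v)) / (1 - Q) - (1 - Q ^ u) / (1 - Q)‖ :=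
        pq_norm_pow_sub_pow_le (pq_norm_div_geom_le hQn.le hq1 _)
          (pq_norm_div_geom_le hQn.le hq1 _) n
    _ ≤ (p : ℝ)⁻¹ ^ N := hbase

end MES

section MES2
variable (hp2 : p ≠ 2) {Q : ℚ_[p]} (hq : ‖1 - Q‖ < 1) (hq1 : Q ≠ 1)

include hp2 hq in
lemma pq_norm_one_sub_qpowN (N : ℕ) : ‖1 - Q ^ p ^ N‖ ≤ (p : ℝ)⁻¹ ^ N * ‖1 - Q‖ := by
  rw [← norm_neg, neg_sub, pq_norm_pow_sub_one hp2 hq, ← norm_neg (Q - 1), neg_sub]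
  apply mul_le_mul_of_nonneg_right _ (norm_nonneg _)
  have : ((p ^ N : ℕ) : ℚ_[p]) = (p : ℚ_[p]) ^ N := by push_cast; ring
  rw [this, norm_pow, Padic.norm_p, inv_pow]

include hq hq1 in
lemma pq_T_le (n N : ℕ) :
    ‖∑ x ∈ range (p ^ N), ((1 - Q ^ x) / (1 - Q)) ^ n * (-1 : ℚ_[p]) ^ x‖ ≤ 1 := by
  refine IsUltrametricDist.norm_sum_le_of_forall_le_of_nonneg zero_le_one fun x _ => ?_
  simp only [norm_mul, norm_pow, norm_neg, norm_one, one_pow, mul_one]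
  exact pow_le_one₀ (norm_nonneg _) (pq_norm_div_geom_le (pq_normQ hq).le hq1 x)

include hp2 hq hq1 in
lemma pq_T_diff (n N : ℕ) :
    ‖(∑ x ∈ range (p ^ (N + 1)), ((1 - Q ^ x) / (1 - Q)) ^ n * (-1 : ℚ_[p]) ^ x)
      - ∑ x ∈ range (p ^ N), ((1 - Q ^ x) / (1 - Q)) ^ n * (-1 : ℚ_[p]) ^ x‖
      ≤ (p : ℝ)⁻¹ ^ N := by
  set g : ℕ → ℚ_[p] := fun x => ((1 - Q ^ x) / (1 - Q)) ^ n with hg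
  have hodd : Odd p := hp.out.odd_of_ne_two hp2
  have hsplit : ∑ x ∈ range (p ^ (N + 1)), g x * (-1 : ℚ_[p]) ^ x
      = ∑ v ∈ range p, ∑ u ∈ range (p ^ N), g (u + p ^ N * v) * (-1 : ℚ_[p]) ^ (u + p ^ N * v) := by
    rw [pow_succ]
    exact pq_sum_range_mul _ (p ^ N) p
  have hsign : ∀ u v : ℕ, (-1 : ℚ_[p]) ^ (u + p ^ N * v) = (-1) ^ u * (-1) ^ v := by
    intro u v
    rw [pow_add, pow_mul, Odd.neg_one_pow hodd.pow]
  have hgeo : ∑ v ∈ range p, (-1 : ℚ_[p]) ^ v = 1 := by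
    rw [neg_one_geom_sum, if_neg (Nat.not_even_iff_odd.mpr hodd)]
  have hT : (∑ x ∈ range (p ^ (N + 1)), g x * (-1 : ℚ_[p]) ^ x)
      - ∑ x ∈ range (p ^ N), g x * (-1 : ℚ_[p]) ^ x
      = ∑ v ∈ range p, (-1 : ℚ_[p]) ^ v *
          ∑ u ∈ range (p ^ N), (-1 : ℚ_[p]) ^ u * (g (u + p ^ N * v) - g u) := by
    have hper : ∀ v, (-1 : ℚ_[p]) ^ v * ∑ u ∈ range (p ^ N), (-1 : ℚ_[p]) ^ u * (g (u + p ^ N * v) - g u)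
        = (∑ u ∈ range (p ^ N), g (u + p ^ N * v) * (-1 : ℚ_[p]) ^ (u + p ^ N * v))
          - (-1 : ℚ_[p]) ^ v * ∑ u ∈ range (p ^ N), g u * (-1 : ℚ_[p]) ^ u := by
      intro v
      rw [Finset.mul_sum, Finset.mul_sum, ← Finset.sum_sub_distrib]
      refine Finset.sum_congr rfl fun u _ => ?_
      rw [hsign]
      ring
    rw [hsplit]
    rw [Finset.sum_congr rfl fun v _ => hper v, Finset.sum_sub_distrib]
    rw [← Finset.sum_mul, hgeo, one_mul]
  rw [hT]
  refine IsUltrametricDist.norm_sum_le_of_forall_le_of_nonneg (by positivity) fun v _ => ?_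
  simp only [norm_mul, norm_pow, norm_neg, norm_one, one_pow, one_mul]
  refine IsUltrametricDist.norm_sum_le_of_forall_le_of_nonneg (by positivity) fun u _ => ?_
  simp only [norm_mul, norm_pow, norm_neg, norm_one, one_pow, one_mul]
  exact pq_gdiff hp2 hq hq1 n u v N

include hp2 hq in
lemma pq_c_norm (N : ℕ) : ‖(1 + Q) / (1 + Q ^ p ^ N)‖ = 1 := by
  have hx : ‖Q ^ p ^ N - 1‖ < 1 := by
    rw [← norm_neg, neg_sub]
    calc ‖1 - Q ^ p ^ N‖ ≤ ‖1 - Q‖ := pq_norm_one_sub_pow_le (pq_normQ hq).le _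
      _ < 1 := hq
  rw [norm_div, pq_norm_one_add hp2 (by rwa [← norm_neg, neg_sub] at hq : ‖Q - 1‖ < 1),
    pq_norm_one_add hp2 hx, div_one]

include hp2 hq in
lemma pq_c_diff (N : ℕ) :
    ‖(1 + Q) / (1 + Q ^ p ^ (N + 1)) - (1 + Q) / (1 + Q ^ p ^ N)‖ ≤ (p : ℝ)⁻¹ ^ N := by
  set x := Q ^ p ^ N with hxdef
  have hQn : ‖Q‖ = 1 := pq_normQ hq
  have hxn : ‖x‖ = 1 := by rw [hxdef, norm_pow, hQn, one_pow]
  have hx1 : ‖x - 1‖ < 1 := by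
    rw [← norm_neg, neg_sub]
    calc ‖1 - x‖ ≤ ‖1 - Q‖ := pq_norm_one_sub_pow_le hQn.le _
      _ < 1 := hq
  have hxp : Q ^ p ^ (N + 1) = x ^ p := by rw [hxdef, ← pow_mul, pow_succ]
  have hxp1 : ‖x ^ p - 1‖ < 1 := by
    rw [← hxp, ← norm_neg, neg_sub]
    calc ‖1 - Q ^ p ^ (N + 1)‖ ≤ ‖1 - Q‖ := pq_norm_one_sub_pow_le hQn.le _
      _ < 1 := hq
  have hd1 : (1 : ℚ_[p]) + x ≠ 0 := by
    intro h
    have := pq_norm_one_add hp2 hx1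
    rw [h, norm_zero] at this
    norm_num at this
  have hd2 : (1 : ℚ_[p]) + x ^ p ≠ 0 := by
    intro h
    have := pq_norm_one_add hp2 hxp1
    rw [h, norm_zero] at this
    norm_num at this
  have heq : (1 + Q) / (1 + x ^ p) - (1 + Q) / (1 + x)
      = (1 + Q) * (x - x ^ p) / ((1 + x) * (1 + x ^ p)) := by
    field_simp
    ring
  rw [hxp, heq, norm_div, norm_mul, norm_mul,
    pq_norm_one_add hp2 (by rwa [← norm_neg, neg_sub] at hq : ‖Q - 1‖ < 1), one_mul,
    pq_norm_one_add hp2 hx1, pq_norm_one_add hp2 hxp1, one_mul, div_one]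
  have hfac : x - x ^ p = x * (1 - x ^ (p - 1)) := by
    have hxe : x ^ p = x * x ^ (p - 1) := by
      rw [← pow_succ']
      congr 1
      have := hp.out.two_le
      omega
    rw [hxe]
    ring
  rw [hfac, norm_mul, hxn, one_mul]
  calc ‖1 - x ^ (p - 1)‖ ≤ ‖1 - x‖ := pq_norm_one_sub_pow_le hxn.le _
    _ ≤ (p : ℝ)⁻¹ ^ N * ‖1 - Q‖ := pq_norm_one_sub_qpowN hp2 hq N
    _ ≤ (p : ℝ)⁻¹ ^ N * 1 := by
        exact mul_le_mul_of_nonneg_left hq.le (by positivity)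
    _ = (p : ℝ)⁻¹ ^ N := mul_one _

include hp2 hq hq1 in
lemma pq_tendsto_modEulerSum (n : ℕ) :
    Filter.Tendsto (modEulerSum p Q n) atTop (𝓝 (modEuler p Q n)) := by
  have hp1 : (1 : ℝ) < (p : ℝ) := by exact_mod_cast hp.out.one_lt
  have hcs : CauchySeq (modEulerSum p Q n) := by
    refine cauchySeq_of_le_geometric (p : ℝ)⁻¹ 1 (by rw [inv_lt_one_iff₀]; right; exact hp1)
      fun N => ?_
    rw [dist_eq_norm, ← norm_neg, neg_sub, one_mul]
    set c : ℕ → ℚ_[p] := fun N => (1 + Q) / (1 + Q ^ p ^ N) with hc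
    set T : ℕ → ℚ_[p] := fun N => ∑ x ∈ range (p ^ N), ((1 - Q ^ x) / (1 - Q)) ^ n * (-1 : ℚ_[p]) ^ x
      with hTdef
    have hS : modEulerSum p Q n (N + 1) - modEulerSum p Q n N
        = c (N + 1) * (T (N + 1) - T N) + (c (N + 1) - c N) * T N := by
      unfold modEulerSum
      simp only [hc, hTdef]
      ring
    rw [hS]
    refine le_trans (Padic.nonarchimedean _ _) (max_le ?_ ?_)
    · rw [norm_mul, pq_c_norm hp2 hq, one_mul]
      exact pq_T_diff hp2 hq hq1 n N
    · rw [norm_mul]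
      calc ‖c (N + 1) - c N‖ * ‖T N‖ ≤ (p : ℝ)⁻¹ ^ N * 1 :=
            mul_le_mul (pq_c_diff hp2 hq N) (pq_T_le hq hq1 n N) (norm_nonneg _) (by positivity)
        _ = (p : ℝ)⁻¹ ^ N := mul_one _
  obtain ⟨t, ht⟩ := cauchySeq_tendsto_of_complete hcs
  have heq : modEuler p Q n = t := ht.limUnder_eq
  rwa [heq]

end MES2

lemma pq_qEulerPoly_eq (hp2 : p ≠ 2) {Q : ℚ_[p]} (hq : ‖1 - Q‖ < 1) (hq1 : Q ≠ 1)
    (m : ℕ) (qa : ℚ_[p]) :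
    qEulerPoly p Q m qa = ∑ j ∈ range (m + 1),
      (m.choose j : ℚ_[p]) * ((1 - qa) / (1 - Q)) ^ (m - j) * qa ^ j * modEuler p Q j := by
  have hQ0 : Q ≠ 0 := by
    intro h
    rw [h, sub_zero, norm_one] at hq
    exact lt_irrefl 1 hq
  have hd : (1 : ℚ_[p]) - Q ≠ 0 := sub_ne_zero.mpr (fun h => hq1 h.symm)
  have hpt : ∀ N : ℕ, (1 + Q) / (1 + Q ^ p ^ N) *
      ∑ t ∈ range (p ^ N), (Q ^ t)⁻¹ * ((1 - qa * Q ^ t) / (1 - Q)) ^ m * (-Q) ^ t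
      = ∑ j ∈ range (m + 1), (m.choose j : ℚ_[p]) * ((1 - qa) / (1 - Q)) ^ (m - j) * qa ^ j
          * modEulerSum p Q j N := by
    intro N
    have hinner : ∀ t : ℕ, (Q ^ t)⁻¹ * ((1 - qa * Q ^ t) / (1 - Q)) ^ m * (-Q) ^ t
        = ∑ j ∈ range (m + 1), ((m.choose j : ℚ_[p]) * ((1 - qa) / (1 - Q)) ^ (m - j) * qa ^ j)
            * (((1 - Q ^ t) / (1 - Q)) ^ j * (-1 : ℚ_[p]) ^ t) := by
      intro t
      have hQt : (Q : ℚ_[p]) ^ t ≠ 0 := pow_ne_zero t hQ0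
      have h1 : (Q ^ t)⁻¹ * ((1 - qa * Q ^ t) / (1 - Q)) ^ m * (-Q) ^ t
          = ((1 - qa * Q ^ t) / (1 - Q)) ^ m * (-1 : ℚ_[p]) ^ t := by
        rw [neg_pow]
        field_simp
      have h2 : (1 - qa * Q ^ t) / (1 - Q)
          = qa * ((1 - Q ^ t) / (1 - Q)) + (1 - qa) / (1 - Q) := by
        rw [← mul_div_assoc, ← add_div]
        congr 1
        ring
      rw [h1, h2, add_pow, Finset.sum_mul]
      refine Finset.sum_congr rfl fun j hj => ?_
      rw [mul_pow]
      ring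
    rw [Finset.sum_congr rfl fun t _ => hinner t, Finset.sum_comm, Finset.mul_sum]
    refine Finset.sum_congr rfl fun j _ => ?_
    unfold modEulerSum
    rw [← Finset.mul_sum]
    ring
  have htend : Filter.Tendsto (fun N => (1 + Q) / (1 + Q ^ p ^ N) *
      ∑ t ∈ range (p ^ N), (Q ^ t)⁻¹ * ((1 - qa * Q ^ t) / (1 - Q)) ^ m * (-Q) ^ t) atTop
      (𝓝 (∑ j ∈ range (m + 1), (m.choose j : ℚ_[p]) * ((1 - qa) / (1 - Q)) ^ (m - j) * qa ^ j
        * modEuler p Q j)) := by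
    have h := tendsto_finset_sum (range (m + 1)) (fun j (_ : j ∈ range (m + 1)) =>
      (pq_tendsto_modEulerSum hp2 hq hq1 j).const_mul
        ((m.choose j : ℚ_[p]) * ((1 - qa) / (1 - Q)) ^ (m - j) * qa ^ j))
    exact Filter.Tendsto.congr (fun N => (hpt N).symm) h
  unfold qEulerPoly
  exact htend.limUnder_eq

end AuxNorm

/-- For `m + 1 ≡ 0 (mod p-1)`, the interpolating function takes the values
`T_q(m, a, N : q^N) = ((1-q^N)/(1-q))^m E_{m,q^N}(a/N)`. -/
theorem Tq_interpolates (hp2 : p ≠ 2) (q : ℚ_[p]) (hq : ‖1 - q‖ < 1)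
    (a N : ℕ) (ha : 0 < a) (hN : 0 < N) (hap : a.Coprime p) (hpN : p ∣ N)
    (m : ℕ) (hm : (p - 1) ∣ (m + 1)) :
    Tq p q (m : ℤ_[p]) a N = ((1 - q ^ N) / (1 - q)) ^ m * qEulerPoly p (q ^ N) m (q ^ a) := by
  have hp3 : 3 ≤ p := by
    have := (Fact.out : p.Prime).two_le
    omega
  have hm1 : 1 ≤ m := by
    rcases Nat.eq_zero_or_pos m with rfl | h
    · have := Nat.le_of_dvd one_pos hm
      omega
    · exact h
  have hm0 : m ≠ 0 := by omega
  rcases eq_or_ne q 1 with rfl | hq1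
  · simp [Tq, padPow_natCast, zero_pow hm0]
  -- main case
  have hqQ : ‖1 - q ^ N‖ < 1 :=
    lt_of_le_of_lt (pq_norm_one_sub_pow_le (pq_norm_q_eq_one hq).le N) hq
  have hQ1 : q ^ N ≠ 1 := pq_pow_ne_one hp2 hq hq1 hN
  have hqa1 : q ^ a ≠ 1 := pq_pow_ne_one hp2 hq hq1 ha
  have hA0 : (1 : ℚ_[p]) - q ^ a ≠ 0 := sub_ne_zero.mpr (fun h => hqa1 h.symm)
  have hB0 : (1 : ℚ_[p]) - q ^ N ≠ 0 := sub_ne_zero.mpr (fun h => hQ1 h.symm)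
  have hC0 : (1 : ℚ_[p]) - q ≠ 0 := sub_ne_zero.mpr (fun h => hq1 h.symm)
  have ht : (teich p a) ^ (p - 1) = 1 := teich_pow_eq_one hap
  have ht0 : teich p a ≠ 0 := by
    intro h
    rw [h, zero_pow (by omega : p - 1 ≠ 0)] at ht
    exact zero_ne_one ht
  have htm : (teich p a)⁻¹ * ((teich p a)⁻¹) ^ m = 1 := by
    obtain ⟨c, hc⟩ := hm
    have h1 : (teich p a) ^ (m + 1) = 1 := by rw [hc, pow_mul, ht, one_pow]
    calc (teich p a)⁻¹ * ((teich p a)⁻¹) ^ m = ((teich p a) ^ (m + 1))⁻¹ := by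
          rw [← pow_succ', inv_pow]
      _ = 1 := by rw [h1, inv_one]
  have hcc : ∀ j : ℕ, cchoose p (((m : ℤ_[p]) : ℚ_[p])) j
      = if j ≤ m then (m.choose j : ℚ_[p]) else 0 := by
    intro j
    have hcast : ((m : ℤ_[p]) : ℚ_[p]) = (m : ℚ_[p]) := by push_cast; rfl
    rw [hcast, cchoose_natCast]
  unfold Tq
  have htsum : ∑' j : ℕ, cchoose p ((m : ℤ_[p]) : ℚ_[p]) j * q ^ (a * j)
      * ((1 - q ^ N) / (1 - q ^ a)) ^ j * modEuler p (q ^ N) j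
      = ∑ j ∈ range (m + 1), (m.choose j : ℚ_[p]) * q ^ (a * j)
        * ((1 - q ^ N) / (1 - q ^ a)) ^ j * modEuler p (q ^ N) j := by
    rw [tsum_eq_sum (s := range (m + 1))
      (fun j hj => by
        rw [hcc j, if_neg (by simp only [Finset.mem_range] at hj; omega), zero_mul,
          zero_mul, zero_mul])]
    refine Finset.sum_congr rfl fun j hj => ?_
    rw [hcc j, if_pos (by simp only [Finset.mem_range] at hj; omega)]
  rw [htsum, padPow_natCast, pq_qEulerPoly_eq hp2 hqQ hQ1 m (q ^ a), mul_pow]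
  rw [show (teich p a)⁻¹ * (((teich p a)⁻¹) ^ m * ((1 - q ^ a) / (1 - q)) ^ m)
      = ((teich p a)⁻¹ * ((teich p a)⁻¹) ^ m) * ((1 - q ^ a) / (1 - q)) ^ m by ring,
    htm, one_mul]
  rw [Finset.mul_sum, Finset.mul_sum]
  refine Finset.sum_congr rfl fun j hj => ?_
  have hjm : j ≤ m := by simp only [Finset.mem_range] at hj; omega
  have key : ((1 - q ^ a) / (1 - q)) ^ m * ((1 - q ^ N) / (1 - q ^ a)) ^ j
      = ((1 - q ^ N) / (1 - q)) ^ m * ((1 - q ^ a) / (1 - q ^ N)) ^ (m - j) := by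
    obtain ⟨k, hk⟩ : ∃ k, m = j + k := ⟨m - j, by omega⟩
    subst hk
    rw [Nat.add_sub_cancel_left]
    rw [pow_add, pow_add]
    rw [div_pow, div_pow, div_pow, div_pow, div_pow, div_pow]
    field_simp
  have hqaj : q ^ (a * j) = (q ^ a) ^ j := by rw [pow_mul]
  rw [hqaj]
  linear_combination ((m.choose j : ℚ_[p]) * (q ^ a) ^ j * modEuler p (q ^ N) j) * key
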